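/- Every supermodular game is exact: if m is supermodular, then for every S ⊆ N there exists v ∈ C(m) with Σ_{i∈S} v_i = m(S), i.e., m(S) = min_{v∈C(m)} Σ_{i∈S} v_i. -/

import Mathlib

open Finset

/-- A game is supermodular if `m A + m B ≤ m (A ∪ B) + m (A ∩ B)` for all `A, B`. -/
def Supermod {N : Type*} [DecidableEq N] (m : Finset N → ℝ) : Prop :=
  ∀ A B : Finset N, m A + m B ≤ m (A ∪ B) + m (A ∩ B)

/-- The core of a game. -/
def core {N : Type*} [Fintype N] [DecidableEq N] (m : Finset N → ℝ) : Set (N → ℝ) :=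
  {v | ∑ i, v i = m Finset.univ ∧ ∀ S : Finset N, m S ≤ ∑ i ∈ S, v i}

/-- Every supermodular game is exact: for every `S` the bound `m S` is attained by some
core element, i.e. `m S = min_{v ∈ C(m)} ∑_{i∈S} v i`. -/
theorem stmt11 {N : Type*} [Fintype N] [DecidableEq N] [Nonempty N]
    (m : Finset N → ℝ) (hm : m ∅ = 0) (hsup : Supermod m) (S : Finset N) :
    IsLeast {r : ℝ | ∃ v ∈ core m, r = ∑ i ∈ S, v i} (m S) := by
  classical
  set f : N → ℕ := fun i => (Fintype.equivFin N i : ℕ) with hf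
  have hflt : ∀ i, f i < Fintype.card N := fun i => (Fintype.equivFin N i).isLt
  have hfinj : Function.Injective f := fun a b h =>
    (Fintype.equivFin N).injective (Fin.ext h)
  set g : N → ℕ := fun i => (if i ∈ S then 0 else Fintype.card N) + f i with hgdef
  have hginj : Function.Injective g := by
    intro a b h
    by_cases ha : a ∈ S <;> by_cases hb : b ∈ S <;>
      simp only [hgdef, ha, hb, if_pos, if_neg, not_false_iff, zero_add] at h
    · exact hfinj h
    · have := hflt a; omega
    · have := hflt b; omega
    · exact hfinj (by omega)
  set P : N → Finset N := fun i => univ.filter (fun j => g j < g i) with hP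
  have hiP : ∀ i, i ∉ P i := by simp [hP]
  set v : N → ℝ := fun i => m (insert i (P i)) - m (P i) with hv
  -- core inequality
  have key : ∀ T : Finset N, m T ≤ ∑ i ∈ T, v i := by
    intro T
    induction T using Finset.strongInduction with
    | _ T ih =>
      rcases T.eq_empty_or_nonempty with rfl | hT
      · simp [hm]
      · obtain ⟨i, hiT, hmax⟩ := T.exists_max_image g hT
        have hsub : T.erase i ⊂ T := erase_ssubset hiT
        have h1 : T ∪ P i = insert i (P i) := by
          ext j
          simp only [mem_union, mem_insert, hP, mem_filter, mem_univ, true_and]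
          constructor
          · rintro (hj | hj)
            · rcases eq_or_ne j i with rfl | hne
              · exact Or.inl rfl
              · exact Or.inr (lt_of_le_of_ne (hmax j hj) (fun h => hne (hginj h)))
            · exact Or.inr hj
          · rintro (rfl | hj)
            · exact Or.inl hiT
            · exact Or.inr hj
        have h2 : T ∩ P i = T.erase i := by
          ext j
          simp only [mem_inter, mem_erase, hP, mem_filter, mem_univ, true_and]
          constructor
          · rintro ⟨hj, hlt⟩
            exact ⟨fun h => absurd hlt (by simp [h]), hj⟩
          · rintro ⟨hne, hj⟩
            exact ⟨hj, lt_of_le_of_ne (hmax j hj) (fun h => hne (hginj h))⟩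
        have hs := hsup T (P i)
        rw [h1, h2] at hs
        have hih := ih (T.erase i) hsub
        have hsum : v i + ∑ j ∈ T.erase i, v j = ∑ j ∈ T, v j :=
          Finset.add_sum_erase T v hiT
        have : m T ≤ v i + m (T.erase i) := by rw [hv]; simp only; linarith
        linarith
  -- telescoping for downward-closed sets
  have teles : ∀ T : Finset N, (∀ i ∈ T, ∀ j, g j < g i → j ∈ T) →
      ∑ i ∈ T, v i = m T := by
    intro T
    induction T using Finset.strongInduction with
    | _ T ih =>
      intro hdc
      rcases T.eq_empty_or_nonempty with rfl | hT
      · simp [hm]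
      · obtain ⟨i, hiT, hmax⟩ := T.exists_max_image g hT
        have hsub : T.erase i ⊂ T := erase_ssubset hiT
        have hPe : P i = T.erase i := by
          ext j
          simp only [hP, mem_filter, mem_univ, true_and, mem_erase]
          constructor
          · intro hlt
            exact ⟨fun h => absurd hlt (by simp [h]), hdc i hiT j hlt⟩
          · rintro ⟨hne, hj⟩
            exact lt_of_le_of_ne (hmax j hj) (fun h => hne (hginj h))
        have hdc' : ∀ a ∈ T.erase i, ∀ j, g j < g a → j ∈ T.erase i := by
          intro a ha j hlt
          rw [mem_erase] at ha ⊢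
          have hjT : j ∈ T := hdc a ha.2 j hlt
          have : g j < g i := lt_of_lt_of_le hlt (hmax a ha.2)
          exact ⟨fun h => absurd this (by simp [h]), hjT⟩
        have hih := ih (T.erase i) hsub hdc'
        have hsum : v i + ∑ j ∈ T.erase i, v j = ∑ j ∈ T, v j :=
          Finset.add_sum_erase T v hiT
        have hins : insert i (P i) = T := by
          rw [hPe, insert_erase hiT]
        rw [← hsum, hih, hv]
        simp only
        rw [hins, hPe]
        ring
  have hSdc : ∀ i ∈ S, ∀ j, g j < g i → j ∈ S := by
    intro i hi j hlt
    by_contra hj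
    simp only [hgdef, hi, hj, if_pos, if_neg, not_false_iff, zero_add] at hlt
    have := hflt i
    omega
  have hcore : v ∈ core m := by
    constructor
    · exact teles univ (fun i _ j _ => mem_univ j)
    · exact key
  refine ⟨⟨v, hcore, (teles S hSdc).symm⟩, ?_⟩
  rintro r ⟨w, hw, rfl⟩
  exact hw.2 S
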